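/- For any string S and any integer a ≥ 0, all prefixes of S with lengths in [2^a, 2^(a+1)) that are of the form V^ℓ with ℓ ≥ 3 are powers of a common primitive string U. That is, there exists a primitive string U such that every such prefix equals U^k for some k. -/

import Mathlib

/-- The `k`-th power of a string: concatenation of `k` copies of `V`. -/
def listPow {α : Type*} (V : List α) (k : ℕ) : List α := (List.replicate k V).flatten

/-- A string is primitive if it is not a power `V^k` with `k > 1`. -/
def PrimitiveList {α : Type*} (U : List α) : Prop :=
  ∀ (V : List α) (k : ℕ), 1 < k → U ≠ listPow V k

namespace CPR

variable {α : Type*}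

/-- `p` is a period of `f` on `[0, n)`. -/
def per (f : ℕ → α) (n p : ℕ) : Prop := ∀ i, i + p < n → f i = f (i + p)

lemma per_mono {f : ℕ → α} {n n' p : ℕ} (h : n' ≤ n) (hp : per f n p) : per f n' p :=
  fun i hi => hp i (lt_of_lt_of_le hi h)

lemma per_iterate {f : ℕ → α} {n p : ℕ} (hp : per f n p) :
    ∀ j i, i + p * j < n → f i = f (i + p * j) := by
  intro j
  induction j with
  | zero => intro i _; simp
  | succ j ih =>
    intro i hi
    have h1 : i + p * j < n := by nlinarith [Nat.mul_le_mul_left p (Nat.le_succ j)]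
    have h2 := hp (i + p * j) (by rw [Nat.mul_succ] at hi; omega)
    rw [ih i h1, h2]
    ring_nf

lemma per_sub {f : ℕ → α} {n p q : ℕ} (hpq : p ≤ q) (hn : p + q ≤ n)
    (hp : per f n p) (hq : per f n q) : per f n (q - p) := by
  intro i hi
  by_cases hiq : i + q < n
  · have h1 := hq i hiq
    have h2 := hp (i + (q - p)) (by omega)
    have e : i + (q - p) + p = i + q := by omega
    rw [e] at h2
    exact h1.trans h2.symm
  · have hip : p ≤ i := by omega
    have h1 := hp (i - p) (by omega)
    have h2 := hq (i - p) (by omega)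
    have e1 : i - p + p = i := by omega
    have e2 : i - p + q = i + (q - p) := by omega
    rw [e1] at h1; rw [e2] at h2
    exact h1.symm.trans h2

/-- Fine–Wilf periodicity lemma. -/
lemma fine_wilf {f : ℕ → α} {n : ℕ} :
    ∀ s p q, p + q ≤ s → per f n p → per f n q → p + q ≤ n → per f n (Nat.gcd p q) := by
  intro s
  induction s with
  | zero =>
    intro p q hs hp _ _
    have h0 : p = 0 ∧ q = 0 := by omega
    rw [h0.1, h0.2]
    intro i _; simp
  | succ s ih =>
    intro p q hs hp hq hn
    rcases Nat.eq_zero_or_pos p with h0 | hp0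
    · subst h0; rw [Nat.gcd_zero_left]; exact hq
    rcases Nat.eq_zero_or_pos q with h0 | hq0
    · subst h0; rw [Nat.gcd_zero_right]; exact hp
    rcases Nat.le_total p q with hpq | hqp
    · have hsub := per_sub hpq hn hp hq
      have hg : Nat.gcd p q = Nat.gcd p (q - p) := by
        conv_lhs => rw [show q = (q - p) + p by omega]
        rw [Nat.gcd_add_self_right]
      rw [hg]
      exact ih p (q - p) (by omega) hp hsub (by omega)
    · have hsub := per_sub hqp (by omega) hq hp
      have hg : Nat.gcd p q = Nat.gcd q (p - q) := by
        rw [Nat.gcd_comm]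
        conv_lhs => rw [show p = (p - q) + q by omega]
        rw [Nat.gcd_add_self_right]
      rw [hg]
      exact ih q (p - q) (by omega) hq hsub (by omega)

lemma length_listPow (V : List α) (k : ℕ) : (listPow V k).length = k * V.length := by
  induction k with
  | zero => simp [listPow]
  | succ k ih =>
    simp only [listPow, List.replicate_succ, List.flatten_cons, List.length_append]
    rw [show (List.replicate k V).flatten.length = (listPow V k).length from rfl, ih]
    ring

lemma listPow_succ (V : List α) (k : ℕ) : listPow V (k + 1) = V ++ listPow V k := by
  simp [listPow, List.replicate_succ]

lemma listPow_add (V : List α) (m n : ℕ) :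
    listPow V (m + n) = listPow V m ++ listPow V n := by
  unfold listPow
  rw [List.replicate_add, List.flatten_append]

lemma listPow_succ' (V : List α) (k : ℕ) : listPow V (k + 1) = listPow V k ++ V := by
  rw [listPow_add]
  simp [listPow]

lemma listPow_mul (V : List α) (m k : ℕ) :
    listPow V (m * k) = listPow (listPow V k) m := by
  induction m with
  | zero => simp [listPow]
  | succ m ih =>
    rw [Nat.succ_mul, listPow_add, ih, listPow_succ']

lemma listPow_prefix (V : List α) {k m : ℕ} (h : k ≤ m) :
    listPow V k <+: listPow V m := by
  refine ⟨listPow V (m - k), ?_⟩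
  rw [← listPow_add]
  congr 1
  omega

/-- A power prefix of `S` gives a period of the extension of `S`. -/
lemma per_of_pow_prefix (S P V : List α) (ℓ : ℕ) (d : α) (hPS : P <+: S)
    (hPV : P = listPow V ℓ) :
    per (fun i => S.getD i d) P.length V.length := by
  intro i hi
  have hlen := hPS.length_le
  rcases ℓ with _ | ℓ'
  · simp [listPow] at hPV
    subst hPV
    simp at hi
  · have hP : P = V ++ listPow V ℓ' := by rw [hPV, listPow_succ]
    have hTP : listPow V ℓ' <+: P := hPV ▸ listPow_prefix V (Nat.le_succ ℓ')
    have hTS : listPow V ℓ' <+: S := hTP.trans hPS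
    have hPlen : P.length = V.length + ℓ' * V.length := by
      rw [hPV, length_listPow, Nat.succ_mul]; ring
    have hiT : i < (listPow V ℓ').length := by
      rw [length_listPow]; omega
    have h1 : S.getD i d = (listPow V ℓ')[i] := by
      rw [List.getD_eq_getElem S d (by have := hTS.length_le; rw [length_listPow] at *; omega),
        hTS.getElem hiT]
    have hiP : i + V.length < S.length := by omega
    have h2 : S.getD (i + V.length) d = (listPow V ℓ')[i] := by
      rw [List.getD_eq_getElem S d hiP]
      have h3 : P[i + V.length]'(hi) = (listPow V ℓ')[i]'hiT := by
        have e1 := List.getElem_of_eq hP hi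
        rw [e1, List.getElem_append_right (Nat.le_add_left _ _)]
        simp
      rw [← h3, hPS.getElem hi]
    show S.getD i d = S.getD (i + V.length) d
    rw [h1, h2]

/-- If the extension of `S` has period `r` on `[0, r*k)`, the prefix of length `r*k`
is the `k`-th power of the prefix of length `r`. -/
lemma take_eq_listPow (S : List α) (d : α) (r : ℕ) (hr : 0 < r) :
    ∀ k, r * k ≤ S.length → per (fun i => S.getD i d) (r * k) r →
      S.take (r * k) = listPow (S.take r) k := by
  intro k
  induction k with
  | zero => simp [listPow]
  | succ k ih =>
    intro hk hper
    have hk' : r * k ≤ S.length := by nlinarith [Nat.mul_le_mul_left r (Nat.le_succ k)]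
    have hmul : r * (k + 1) = r * k + r := by ring
    rw [hmul, List.take_add, listPow_succ']
    congr 1
    · exact ih (by omega) (per_mono (by omega) hper)
    · have hlen1 : ((S.drop (r * k)).take r).length = r := by
        rw [List.length_take, List.length_drop]
        omega
      have hlen2 : (S.take r).length = r := by
        rw [List.length_take]; omega
      apply List.ext_getElem (by rw [hlen1, hlen2])
      intro i h1 h2
      have hir : i < r := by omega
      have hd : ((S.drop (r * k)).take r)[i] = S[r * k + i]'(by omega) := by
        rw [List.getElem_take, List.getElem_drop]
      have ht : (S.take r)[i] = S[i]'(by omega) := List.getElem_take ..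
      rw [hd, ht,
        ← List.getD_eq_getElem S d (show r * k + i < S.length by omega),
        ← List.getD_eq_getElem S d (show i < S.length by omega)]
      have h5 := per_iterate hper k i (by rw [hmul]; omega)
      have h6 : S.getD i d = S.getD (i + r * k) d := h5
      rw [h6, Nat.add_comm]

end CPR

open CPR in
/-- All prefixes of `S` with lengths in `[2^a, 2^(a+1))` that are powers `V^ℓ` with `ℓ ≥ 3`
are powers of a common primitive string `U`. -/
theorem common_primitive_root_of_high_power_prefixes {α : Type*} [Nonempty α]
    (S : List α) (a : ℕ) :
    ∃ U : List α, PrimitiveList U ∧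
      ∀ P : List α, P <+: S → P.length ∈ Set.Ico (2 ^ a) (2 ^ (a + 1)) →
        (∃ (V : List α) (ℓ : ℕ), 3 ≤ ℓ ∧ P = listPow V ℓ) →
        ∃ k : ℕ, P = listPow U k := by
  classical
  obtain ⟨d⟩ := ‹Nonempty α›
  set f : ℕ → α := fun i => S.getD i d with hf
  set Q : ℕ → Prop := fun n =>
    n ∈ Set.Ico (2 ^ a) (2 ^ (a + 1)) ∧ n ≤ S.length ∧
      ∃ V ℓ, 3 ≤ ℓ ∧ S.take n = listPow V ℓ with hQ
  by_cases hex : ∃ n, Q n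
  · -- there exists a qualifying prefix; take the shortest one
    set n0 := Nat.find hex with hn0def
    obtain ⟨⟨h2a, h2b⟩, hn0S, W, m, hm3, hP0W⟩ := Nat.find_spec hex
    have hn0pos : 0 < n0 := lt_of_lt_of_le (pow_pos (by norm_num) a) h2a
    have hW : n0 = m * W.length := by
      have := congrArg List.length hP0W
      rw [List.length_take, length_listPow] at this
      omega
    have hWpos : 0 < W.length := by
      rcases Nat.eq_zero_or_pos W.length with h0 | h1
      · rw [h0] at hW; omega
      · exact h1
    have h3W : 3 * W.length ≤ n0 := by
      rw [hW]; nlinarith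
    have hperW : per f n0 W.length := by
      have := per_of_pow_prefix S (S.take n0) W m d (List.take_prefix n0 S) hP0W
      rwa [List.length_take, min_eq_left hn0S] at this
    -- minimal period r of the prefix of length n0
    have hRex : ∃ p, 0 < p ∧ p ≤ n0 ∧ per f n0 p := ⟨W.length, hWpos, by omega, hperW⟩
    set r := Nat.find hRex with hrdef
    obtain ⟨hrpos, hrn0, hperr⟩ := Nat.find_spec hRex
    have hrW : r ≤ W.length := Nat.find_min' hRex ⟨hWpos, by omega, hperW⟩
    have hrdvdW : r ∣ W.length := by
      have hperg : per f n0 (Nat.gcd r W.length) :=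
        fine_wilf (r + W.length) r W.length le_rfl hperr hperW (by omega)
      have hgpos : 0 < Nat.gcd r W.length := Nat.gcd_pos_of_pos_left _ hrpos
      have hgle : Nat.gcd r W.length ≤ r := Nat.gcd_le_left _ hrpos
      have hrg : r ≤ Nat.gcd r W.length := Nat.find_min' hRex ⟨hgpos, by omega, hperg⟩
      have hgr : Nat.gcd r W.length = r := le_antisymm hgle hrg
      exact hgr ▸ Nat.gcd_dvd_right r W.length
    have hrdvdn0 : r ∣ n0 := hW ▸ Dvd.dvd.mul_left hrdvdW m
    refine ⟨S.take r, ?_, ?_⟩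
    · -- primitivity of U = S.take r
      intro Y k hk hUY
      have hUlen : (S.take r).length = r := by
        rw [List.length_take]; omega
      have hYlen : r = k * Y.length := by
        have := congrArg List.length hUY
        rwa [hUlen, length_listPow] at this
      have hYpos : 0 < Y.length := by
        rcases Nat.eq_zero_or_pos Y.length with h0 | h1
        · rw [h0] at hYlen; omega
        · exact h1
      have hYlt : Y.length < r := by nlinarith
      have hP0U : S.take n0 = listPow (S.take r) (n0 / r) := by
        have := take_eq_listPow S d r hrpos (n0 / r)
          (by rw [Nat.mul_div_cancel' hrdvdn0]; exact hn0S)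
          (by rw [Nat.mul_div_cancel' hrdvdn0]; exact hperr)
        rwa [Nat.mul_div_cancel' hrdvdn0] at this
      have hP0Y : S.take n0 = listPow Y ((n0 / r) * k) := by
        rw [hP0U, hUY, listPow_mul]
      have hperY : per f n0 Y.length := by
        have := per_of_pow_prefix S (S.take n0) Y ((n0 / r) * k) d
          (List.take_prefix n0 S) hP0Y
        rwa [List.length_take, min_eq_left hn0S] at this
      exact Nat.find_min hRex hYlt ⟨hYpos, by omega, hperY⟩
    · -- every qualifying prefix is a power of U
      rintro P hPS hlenP ⟨V, ℓ, hl3, hPV⟩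
      have hPtake : P = S.take P.length := List.prefix_iff_eq_take.1 hPS
      have hQn : Q P.length :=
        ⟨hlenP, hPS.length_le, V, ℓ, hl3, by rw [← hPtake, hPV]⟩
      have hn0n : n0 ≤ P.length := Nat.find_min' hex hQn
      have hVlen : P.length = ℓ * V.length := by
        rw [hPV, length_listPow]
      have hVpos : 0 < V.length := by
        rcases Nat.eq_zero_or_pos V.length with h0 | h1
        · exfalso
          have := hlenP.1
          have h2 : (0:ℕ) < 2 ^ a := pow_pos (by norm_num) a
          rw [h0, Nat.mul_zero] at hVlen
          omega
        · exact h1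
      have h3V : 3 * V.length ≤ P.length := by rw [hVlen]; nlinarith
      have hperV : per f P.length V.length := per_of_pow_prefix S P V ℓ d hPS hPV
      have hperVn0 : per f n0 V.length := per_mono hn0n hperV
      have hpow2 : (2:ℕ) ^ (a + 1) = 2 * 2 ^ a := by rw [pow_succ]; ring
      have hP2 : P.length < 2 ^ (a + 1) := hlenP.2
      have hVr : V.length + r ≤ n0 := by omega
      have hrdvdV : r ∣ V.length := by
        have hperg : per f n0 (Nat.gcd r V.length) :=
          fine_wilf (r + V.length) r V.length le_rfl hperr hperVn0 (by omega)
        have hgpos : 0 < Nat.gcd r V.length := Nat.gcd_pos_of_pos_left _ hrpos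
        have hgle : Nat.gcd r V.length ≤ r := Nat.gcd_le_left _ hrpos
        have hrg : r ≤ Nat.gcd r V.length := Nat.find_min' hRex ⟨hgpos, by omega, hperg⟩
        have hgr : Nat.gcd r V.length = r := le_antisymm hgle hrg
        exact hgr ▸ Nat.gcd_dvd_right r V.length
      have hVpre : V <+: S := by
        have hVP : V <+: P := by
          rw [hPV]
          obtain ⟨l', rfl⟩ : ∃ l', ℓ = l' + 1 := ⟨ℓ - 1, by omega⟩
          rw [listPow_succ]
          exact List.prefix_append V _
        exact hVP.trans hPS
      have hVS : V.length ≤ S.length := hVpre.length_le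
      have hVU : V = listPow (S.take r) (V.length / r) := by
        have := take_eq_listPow S d r hrpos (V.length / r)
          (by rw [Nat.mul_div_cancel' hrdvdV]; exact hVS)
          (by rw [Nat.mul_div_cancel' hrdvdV]; exact per_mono (by omega) hperr)
        rw [Nat.mul_div_cancel' hrdvdV] at this
        rw [← List.prefix_iff_eq_take.1 hVpre] at this
        exact this
      exact ⟨ℓ * (V.length / r), by
        rw [hPV, listPow_mul]
        exact congrArg (fun X => listPow X ℓ) hVU⟩
  · -- no qualifying prefix: any primitive string works
    refine ⟨[d], ?_, ?_⟩
    · intro V k hk h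
      have hlen := congrArg List.length h
      rw [length_listPow] at hlen
      simp at hlen
      rcases Nat.eq_zero_or_pos V.length with h0 | h1
      · rw [h0] at hlen; omega
      · have : 2 ≤ k * V.length := by nlinarith
        omega
    · intro P hPS hlen hpow
      exfalso
      apply hex
      refine ⟨P.length, hlen, hPS.length_le, ?_⟩
      obtain ⟨V, ℓ, h3, hPV⟩ := hpow
      exact ⟨V, ℓ, h3, by rw [← List.prefix_iff_eq_take.1 hPS, hPV]⟩
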